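/- The least-squares minimization problem: find σ ∈ H_{g,-}(div;Ω) minimizing J₁(τ;f,g) = ‖∇·τ + γ̃(β·τ) - f‖₀² + Σᵢ ‖τ·β⊥⁽ⁱ⁾‖₀² has a unique solution, and the minimum value is zero, given by σ = βu where u ∈ W solves the transport equation ∇·(βu) + γu = f with u = g on Γ₋. -/

import Mathlib

open MeasureTheory Real RealInnerProductSpace ENNReal

/-- The first least-squares functional
`J₁(τ; f, g) = ‖∇·τ + γ̃(β·τ) - f‖₀² + Σᵢ ‖τ·β⊥⁽ⁱ⁾‖₀²`, `γ̃ = γ/|β|²`,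
acting on pairs `p = (τ, ∇·τ)`. -/
noncomputable def lsJ1 {α : Type*} [MeasurableSpace α] {d : ℕ}
    (μ : Measure α) (β : α → EuclideanSpace ℝ (Fin d)) (γ : α → ℝ)
    (βp : Fin (d - 1) → α → EuclideanSpace ℝ (Fin d)) (f : α → ℝ)
    (p : (α → EuclideanSpace ℝ (Fin d)) × (α → ℝ)) : ℝ≥0∞ :=
  eLpNorm (fun x => p.2 x + (γ x / ‖β x‖ ^ 2) * ⟪β x, p.1 x⟫ - f x) 2 μ ^ 2
    + ∑ i, eLpNorm (fun x => ⟪p.1 x, βp i x⟫) 2 μ ^ 2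

lemma perp_aux {d : ℕ} (b : EuclideanSpace ℝ (Fin d)) (hb : ‖b‖ ≠ 0)
    (vv : Fin (d - 1) → EuclideanSpace ℝ (Fin d))
    (hvb : ∀ i, ⟪b, vv i⟫ = 0)
    (hvv : ∀ i j, ⟪vv i, vv j⟫ = if i = j then 1 else 0)
    (w : EuclideanSpace ℝ (Fin d)) (hwb : ⟪b, w⟫ = 0) (hwv : ∀ i, ⟪vv i, w⟫ = 0) :
    w = 0 := by
  obtain ⟨m, rfl⟩ : ∃ m, d = m + 1 := by
    cases d with
    | zero =>
      exfalso
      apply hb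
      have : b = 0 := by ext i; exact i.elim0
      rw [this, norm_zero]
    | succ m => exact ⟨m, rfl⟩
  set e : Fin (m + 1) → EuclideanSpace ℝ (Fin (m + 1)) :=
    Fin.cons (‖b‖⁻¹ • b) (fun i => vv i) with he
  have hon : Orthonormal ℝ e := by
    rw [orthonormal_iff_ite]
    intro i j
    induction i using Fin.cases with
    | zero =>
      induction j using Fin.cases with
      | zero =>
        simp only [he, Fin.cons_zero, if_pos rfl]
        rw [real_inner_smul_left, real_inner_smul_right, real_inner_self_eq_norm_sq]
        field_simp
        simp
      | succ j =>
        simp only [he, Fin.cons_zero, Fin.cons_succ]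
        rw [real_inner_smul_left, hvb, mul_zero, if_neg (Fin.succ_ne_zero j).symm]
    | succ i =>
      induction j using Fin.cases with
      | zero =>
        simp only [he, Fin.cons_zero, Fin.cons_succ]
        rw [real_inner_smul_right, real_inner_comm, hvb, mul_zero,
          if_neg (Fin.succ_ne_zero i)]
      | succ j =>
        simp only [he, Fin.cons_succ, hvv, Fin.succ_inj]
  have hc : Fintype.card (Fin (m + 1)) = Module.finrank ℝ (EuclideanSpace ℝ (Fin (m + 1))) := by
    simp [finrank_euclideanSpace_fin]
  set B := basisOfLinearIndependentOfCardEqFinrank hon.linearIndependent hc with hB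
  have hBe : ∀ i, B i = e i := fun i => by
    rw [hB, coe_basisOfLinearIndependentOfCardEqFinrank]
  have hew : ∀ i, ⟪e i, w⟫ = 0 := by
    intro i
    induction i using Fin.cases with
    | zero =>
      simp only [he, Fin.cons_zero]
      rw [real_inner_smul_left, hwb, mul_zero]
    | succ i =>
      simp only [he, Fin.cons_succ]
      exact hwv i
  have h0 : ⟪∑ i, B.repr w i • B i, w⟫ = 0 := by
    rw [sum_inner]
    refine Finset.sum_eq_zero fun i _ => ?_
    rw [real_inner_smul_left, hBe, hew, mul_zero]
  rw [B.sum_repr w] at h0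
  exact inner_self_eq_zero.mp h0

/-- the least-squares problem `min J₁(τ; f, g)` over `H_{g,-}(div;Ω)`
(modelled as a set `Vg` of pairs `(τ, ∇·τ)`) has a unique solution, the minimum value
is zero, and the minimizer is `σ = βu`, where `u` solves the transport equation
`∇·(βu) + γu = f`, `u = g` on `Γ₋` (encoded by `(βu, f - γu) ∈ Vg`). -/
theorem stmt_5 {α : Type*} [MeasurableSpace α] {d : ℕ}
    (μ : Measure α) (β : α → EuclideanSpace ℝ (Fin d)) (γ : α → ℝ)
    (βp : Fin (d - 1) → α → EuclideanSpace ℝ (Fin d)) (f : α → ℝ)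
    (hmβ : Measurable β) (hmγ : Measurable γ) (hmβp : ∀ i, Measurable (βp i))
    (hβpos : ∀ x, 0 < ‖β x‖)
    (hperp : ∀ i x, ⟪β x, βp i x⟫ = 0)
    (horth : ∀ i j x, ⟪βp i x, βp j x⟫ = if i = j then 1 else 0)
    -- Vg models H_{g,-}(div;Ω), V0 models H_{0,-}(div;Ω)
    (Vg V0 : Set ((α → EuclideanSpace ℝ (Fin d)) × (α → ℝ)))
    (hVgmeas : ∀ p ∈ Vg, AEStronglyMeasurable p.1 μ ∧ AEStronglyMeasurable p.2 μ)
    (hdiff : ∀ p ∈ Vg, ∀ q ∈ Vg, (p.1 - q.1, p.2 - q.2) ∈ V0)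
    -- uniqueness for the homogeneous transport problem with zero inflow data
    (huniq : ∀ v : α → ℝ, ∀ p ∈ V0, (p.1 =ᵐ[μ] fun x => v x • β x) →
      ((fun x => p.2 x + γ x * v x) =ᵐ[μ] 0) → v =ᵐ[μ] 0)
    -- u ∈ W solves the transport equation with inflow data g, so that
    -- σ = βu ∈ H_{g,-}(div;Ω) and ∇·σ = f - γu
    (u : α → ℝ) (hu : AEStronglyMeasurable u μ)
    (hsol : ((fun x => u x • β x), (fun x => f x - γ x * u x)) ∈ Vg) :
    lsJ1 μ β γ βp f ((fun x => u x • β x), (fun x => f x - γ x * u x)) = 0 ∧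
    (∀ p ∈ Vg,
      lsJ1 μ β γ βp f ((fun x => u x • β x), (fun x => f x - γ x * u x)) ≤
        lsJ1 μ β γ βp f p) ∧
    (∀ p ∈ Vg, (∀ q ∈ Vg, lsJ1 μ β γ βp f p ≤ lsJ1 μ β γ βp f q) →
      p.1 =ᵐ[μ] (fun x => u x • β x) ∧ p.2 =ᵐ[μ] (fun x => f x - γ x * u x)) := by
  -- the value of J₁ at the solution is zero
  have e1 : (fun x => (f x - γ x * u x) + (γ x / ‖β x‖ ^ 2) * ⟪β x, u x • β x⟫ - f x)
      = (fun _ => (0 : ℝ)) := by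
    funext x
    have hb : ‖β x‖ ≠ 0 := (hβpos x).ne'
    rw [real_inner_smul_right, real_inner_self_eq_norm_sq]
    field_simp
    ring
  have e2 : ∀ i, (fun x => ⟪u x • β x, βp i x⟫) = (fun _ => (0 : ℝ)) := fun i => by
    funext x
    rw [real_inner_smul_left, hperp, mul_zero]
  have h0 : lsJ1 μ β γ βp f ((fun x => u x • β x), (fun x => f x - γ x * u x)) = 0 := by
    simp only [lsJ1, e1, e2, eLpNorm_zero']
    simp
  refine ⟨h0, fun p _ => h0 ▸ zero_le, ?_⟩
  intro p hp hmin
  obtain ⟨hm1, hm2⟩ := hVgmeas p hp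
  -- f is a.e. strongly measurable
  have hf : AEStronglyMeasurable f μ := by
    have h := (hVgmeas _ hsol).2.add ((hmγ.aestronglyMeasurable).mul hu)
    exact h.congr (Filter.Eventually.of_forall fun x => by simp only [Pi.add_apply, Pi.mul_apply]; ring)
  -- the minimum value at p is zero
  have hz : lsJ1 μ β γ βp f p = 0 := le_antisymm (h0 ▸ hmin _ hsol) (zero_le)
  simp only [lsJ1] at hz
  rw [add_eq_zero] at hz
  obtain ⟨hz1, hz2⟩ := hz
  rw [pow_eq_zero_iff two_ne_zero] at hz1
  have hz2' : ∀ i : Fin (d - 1), eLpNorm (fun x => ⟪p.1 x, βp i x⟫) 2 μ = 0 := by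
    intro i
    have := (Finset.sum_eq_zero_iff.mp hz2) i (Finset.mem_univ i)
    rwa [pow_eq_zero_iff two_ne_zero] at this
  -- measurability of the integrands
  have hmA : AEStronglyMeasurable (fun x => ⟪β x, p.1 x⟫) μ :=
    hmβ.aestronglyMeasurable.inner hm1
  have hmg : Measurable (fun x => γ x / ‖β x‖ ^ 2) :=
    hmγ.div ((hmβ.norm).pow measurable_const)
  have hmT1 : AEStronglyMeasurable
      (fun x => p.2 x + (γ x / ‖β x‖ ^ 2) * ⟪β x, p.1 x⟫ - f x) μ :=
    (hm2.add (hmg.aestronglyMeasurable.mul hmA)).sub hf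
  have h1 : ∀ᵐ x ∂μ, p.2 x + (γ x / ‖β x‖ ^ 2) * ⟪β x, p.1 x⟫ - f x = 0 := by
    have := (eLpNorm_eq_zero_iff hmT1 two_ne_zero).mp hz1
    filter_upwards [this] with x hx using hx
  have h2 : ∀ᵐ x ∂μ, ∀ i, ⟪p.1 x, βp i x⟫ = 0 := by
    rw [MeasureTheory.ae_all_iff]
    intro i
    have := (eLpNorm_eq_zero_iff (hm1.inner (hmβp i).aestronglyMeasurable)
      two_ne_zero).mp (hz2' i)
    filter_upwards [this] with x hx using hx
  set v : α → ℝ := fun x => ⟪β x, p.1 x⟫ / ‖β x‖ ^ 2 with hv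
  have hA : ∀ᵐ x ∂μ, p.1 x = v x • β x := by
    filter_upwards [h2] with x hx
    have hb : ‖β x‖ ≠ 0 := (hβpos x).ne'
    have hw0 : p.1 x - v x • β x = 0 := by
      refine perp_aux (β x) hb (fun i => βp i x) (fun i => hperp i x)
        (fun i j => horth i j x) _ ?_ ?_
      · rw [inner_sub_right, real_inner_smul_right, real_inner_self_eq_norm_sq, hv]
        field_simp
        simp
      · intro i
        show ⟪βp i x, p.1 x - v x • β x⟫ = 0
        have hc1 : ⟪βp i x, p.1 x⟫ = 0 := by rw [real_inner_comm]; exact hx i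
        have hc2 : ⟪βp i x, β x⟫ = 0 := by rw [real_inner_comm]; exact hperp i x
        rw [inner_sub_right, real_inner_smul_right, hc1, hc2]
        ring
    exact sub_eq_zero.mp hw0
  have hB : ∀ᵐ x ∂μ, p.2 x + γ x * v x = f x := by
    filter_upwards [h1] with x hx
    have hexp : γ x / ‖β x‖ ^ 2 * ⟪β x, p.1 x⟫ = γ x * v x := by
      show _ = γ x * (⟪β x, p.1 x⟫ / ‖β x‖ ^ 2)
      ring
    rw [hexp] at hx
    linarith
  have hq := hdiff p hp _ hsol
  have hA' : (p.1 - fun x => u x • β x) =ᵐ[μ] fun x => (v x - u x) • β x := by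
    filter_upwards [hA] with x hx
    simp only [Pi.sub_apply, hx, sub_smul]
  have hB' : (fun x => (p.2 - fun x => f x - γ x * u x) x + γ x * (v x - u x)) =ᵐ[μ]
      (0 : α → ℝ) := by
    filter_upwards [hB] with x hx
    simp only [Pi.sub_apply, Pi.zero_apply]
    have : γ x * (v x - u x) = γ x * v x - γ x * u x := by ring
    linarith
  have hvu := huniq (fun x => v x - u x) _ hq hA' hB'
  have hvu' : ∀ᵐ x ∂μ, v x = u x := by
    filter_upwards [hvu] with x hx
    have hx0 : v x - u x = 0 := hx
    linarith
  constructor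
  · filter_upwards [hA, hvu'] with x h1x h2x
    rw [h1x, h2x]
  · filter_upwards [hB, hvu'] with x h1x h2x
    rw [← h2x]
    linarith
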